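/- Let A ∈ ℝ^{m×n} and B ∈ ℝ^{n×p}, let p₁,…,p_n be strictly positive probabilities summing to one, and let W ∈ ℝ^{s×n} be the random sampling-and-rescaling matrix of Algorithm 1 built from these probabilities. Then E[‖A Wᵀ W B − A B‖_F²] ≤ Σ_{i=1}^{n} ‖A_{*i}‖₂² ‖B_{i*}‖₂² / (s p_i). -/

import Mathlib

open Matrix BigOperators

noncomputable def frobNorm {m n : Type*} [Fintype m] [Fintype n]
    (A : Matrix m n ℝ) : ℝ := Real.sqrt (∑ i, ∑ j, (A i j) ^ 2)

noncomputable def specNorm {m n : ℕ} (A : Matrix (Fin m) (Fin n) ℝ) : ℝ :=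
  ‖LinearMap.toContinuousLinearMap (Matrix.toEuclideanLin A)‖

noncomputable def truncDiag {r : ℕ} (σ : Fin r → ℝ) (m : ℕ) :
    Matrix (Fin r) (Fin r) ℝ :=
  Matrix.diagonal fun i => if (i : ℕ) < m then σ i else 0

noncomputable def samplingMatrix {n : ℕ} (p : Fin n → ℝ) (s : ℕ) (ω : Fin s → Fin n) :
    Matrix (Fin s) (Fin n) ℝ :=
  fun i j => if j = ω i then 1 / Real.sqrt (s * p j) else 0

noncomputable def expec {n s : ℕ} (p : Fin n → ℝ) (f : (Fin s → Fin n) → ℝ) : ℝ :=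
  ∑ ω : Fin s → Fin n, (∏ i, p (ω i)) * f ω

open Classical in
noncomputable def probOf {n s : ℕ} (p : Fin n → ℝ) (E : (Fin s → Fin n) → Prop) : ℝ :=
  ∑ ω : Fin s → Fin n, if E ω then (∏ i, p (ω i)) else 0

def firstCols {n r : ℕ} (U : Matrix (Fin n) (Fin r) ℝ) (k : ℕ) (h : k ≤ r) :
    Matrix (Fin n) (Fin k) ℝ :=
  fun i j => U i (Fin.castLE h j)

noncomputable def ridgeDiag {r : ℕ} (σ : Fin r → ℝ) (lam : ℝ) :
    Matrix (Fin r) (Fin r) ℝ :=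
  Matrix.diagonal fun i => σ i / Real.sqrt (σ i ^ 2 + lam)

lemma sum_fn_prod {n s : ℕ} (h : Fin s → Fin n → ℝ) :
    ∑ ω : Fin s → Fin n, ∏ i, h i (ω i) = ∏ i, ∑ k, h i k := by
  rw [Finset.prod_univ_sum, Fintype.piFinset_univ]

lemma E_single {n s : ℕ} (p y : Fin n → ℝ) (hsum : ∑ i, p i = 1) (i : Fin s) :
    ∑ ω : Fin s → Fin n, (∏ j, p (ω j)) * y (ω i) = ∑ k, p k * y k := by
  have key := sum_fn_prod (fun j k => p k * (if i = j then y k else 1))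
  calc ∑ ω : Fin s → Fin n, (∏ j, p (ω j)) * y (ω i)
      = ∑ ω : Fin s → Fin n, ∏ j, p (ω j) * (if i = j then y (ω j) else 1) := by
        refine Finset.sum_congr rfl (fun ω _ => ?_)
        rw [Finset.prod_mul_distrib, Finset.prod_ite_eq, if_pos (Finset.mem_univ i)]
    _ = ∏ j, ∑ k, p k * (if i = j then y k else 1) := key
    _ = ∏ j, (if i = j then ∑ k, p k * y k else 1) := by
        refine Finset.prod_congr rfl (fun j _ => ?_)
        by_cases hij : i = j <;> simp [hij, hsum]
    _ = ∑ k, p k * y k := by rw [Finset.prod_ite_eq, if_pos (Finset.mem_univ i)]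

lemma E_pair {n s : ℕ} (p y : Fin n → ℝ) (hsum : ∑ i, p i = 1) (i i' : Fin s) :
    ∑ ω : Fin s → Fin n, (∏ j, p (ω j)) * (y (ω i) * y (ω i'))
      = if i = i' then ∑ k, p k * y k ^ 2 else (∑ k, p k * y k) ^ 2 := by
  rcases eq_or_ne i i' with rfl | hne
  · rw [if_pos rfl]
    have key := sum_fn_prod (fun j k => p k * (if i = j then y k ^ 2 else 1))
    calc ∑ ω : Fin s → Fin n, (∏ j, p (ω j)) * (y (ω i) * y (ω i))
        = ∑ ω : Fin s → Fin n, ∏ j, p (ω j) * (if i = j then y (ω j) ^ 2 else 1) := by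
          refine Finset.sum_congr rfl (fun ω _ => ?_)
          rw [Finset.prod_mul_distrib, Finset.prod_ite_eq, if_pos (Finset.mem_univ i)]
          ring
      _ = ∏ j, ∑ k, p k * (if i = j then y k ^ 2 else 1) := key
      _ = ∏ j, (if i = j then ∑ k, p k * y k ^ 2 else 1) := by
          refine Finset.prod_congr rfl (fun j _ => ?_)
          by_cases hij : i = j <;> simp [hij, hsum]
      _ = ∑ k, p k * y k ^ 2 := by rw [Finset.prod_ite_eq, if_pos (Finset.mem_univ i)]
  · rw [if_neg hne]
    have key := sum_fn_prod (fun j k => p k * (if i = j then y k else 1) * (if i' = j then y k else 1))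
    calc ∑ ω : Fin s → Fin n, (∏ j, p (ω j)) * (y (ω i) * y (ω i'))
        = ∑ ω : Fin s → Fin n, ∏ j, p (ω j) * (if i = j then y (ω j) else 1) * (if i' = j then y (ω j) else 1) := by
          refine Finset.sum_congr rfl (fun ω _ => ?_)
          simp only [Finset.prod_mul_distrib, Finset.prod_ite_eq, if_pos (Finset.mem_univ i),
            if_pos (Finset.mem_univ i')]
          ring
      _ = ∏ j, ∑ k, p k * (if i = j then y k else 1) * (if i' = j then y k else 1) := key
      _ = ∏ j, ((if i = j then ∑ k, p k * y k else 1) * (if i' = j then ∑ k, p k * y k else 1)) := by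
          refine Finset.prod_congr rfl (fun j _ => ?_)
          by_cases hij : i = j
          · have hij' : ¬ i' = j := fun h => hne (hij.trans h.symm)
            simp [hij, hij']
          · by_cases hij' : i' = j
            · simp [hij, hij']
            · simp [hij, hij', hsum]
      _ = (∑ k, p k * y k) ^ 2 := by
          rw [Finset.prod_mul_distrib, Finset.prod_ite_eq, Finset.prod_ite_eq,
            if_pos (Finset.mem_univ i), if_pos (Finset.mem_univ i')]
          ring

lemma var_bound {n : ℕ} (s : ℕ) (p y : Fin n → ℝ) (hsum : ∑ i, p i = 1) :
    ∑ ω : Fin s → Fin n, (∏ j, p (ω j)) * ((∑ i, y (ω i)) - s * (∑ k, p k * y k)) ^ 2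
      ≤ s * ∑ k, p k * y k ^ 2 := by
  set mm := ∑ k, p k * y k with hmm
  set Q := ∑ k, p k * y k ^ 2 with hQ
  have E0 : ∑ ω : Fin s → Fin n, (∏ j, p (ω j)) = 1 := by
    have key := sum_fn_prod (s := s) (fun _ k => p k)
    rw [key, hsum, Finset.prod_const_one]
  have E1 : ∑ ω : Fin s → Fin n, (∏ j, p (ω j)) * (∑ i, y (ω i)) = s * mm := by
    calc ∑ ω : Fin s → Fin n, (∏ j, p (ω j)) * (∑ i, y (ω i))
        = ∑ ω : Fin s → Fin n, ∑ i, (∏ j, p (ω j)) * y (ω i) := by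
          simp [Finset.mul_sum]
      _ = ∑ i : Fin s, ∑ ω : Fin s → Fin n, (∏ j, p (ω j)) * y (ω i) := Finset.sum_comm
      _ = ∑ _i : Fin s, mm := Finset.sum_congr rfl fun i _ => E_single p y hsum i
      _ = s * mm := by simp [mul_comm]
  have E2 : ∑ ω : Fin s → Fin n, (∏ j, p (ω j)) * (∑ i, y (ω i)) ^ 2
      = s * Q + ((s : ℝ) ^ 2 - s) * mm ^ 2 := by
    calc ∑ ω : Fin s → Fin n, (∏ j, p (ω j)) * (∑ i, y (ω i)) ^ 2
        = ∑ ω : Fin s → Fin n, ∑ i : Fin s, ∑ i' : Fin s, (∏ j, p (ω j)) * (y (ω i) * y (ω i')) := by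
          refine Finset.sum_congr rfl (fun ω _ => ?_)
          rw [sq, Finset.sum_mul_sum]
          simp [Finset.mul_sum]
      _ = ∑ i : Fin s, ∑ i' : Fin s, ∑ ω : Fin s → Fin n, (∏ j, p (ω j)) * (y (ω i) * y (ω i')) := by
          rw [Finset.sum_comm]
          exact Finset.sum_congr rfl fun i _ => Finset.sum_comm
      _ = ∑ i : Fin s, ∑ i' : Fin s, (if i = i' then Q else mm ^ 2) :=
          Finset.sum_congr rfl fun i _ => Finset.sum_congr rfl fun i' _ => E_pair p y hsum i i'
      _ = ∑ i : Fin s, (Q + ((s : ℝ) - 1) * mm ^ 2) := by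
          refine Finset.sum_congr rfl (fun i _ => ?_)
          have h1 : ∀ i' : Fin s, (if i = i' then Q else mm ^ 2)
              = mm ^ 2 + (if i = i' then Q - mm ^ 2 else 0) := by
            intro i'; by_cases h : i = i' <;> simp [h]
          rw [Finset.sum_congr rfl fun i' _ => h1 i', Finset.sum_add_distrib,
            Finset.sum_ite_eq, if_pos (Finset.mem_univ i)]
          simp
          ring
      _ = s * Q + ((s : ℝ) ^ 2 - s) * mm ^ 2 := by
          simp
          ring
  have expand : ∀ ω : Fin s → Fin n, (∏ j, p (ω j)) * ((∑ i, y (ω i)) - s * mm) ^ 2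
      = (∏ j, p (ω j)) * (∑ i, y (ω i)) ^ 2
        - 2 * (s * mm) * ((∏ j, p (ω j)) * (∑ i, y (ω i)))
        + (s * mm) ^ 2 * (∏ j, p (ω j)) := fun ω => by ring
  rw [Finset.sum_congr rfl fun ω _ => expand ω, Finset.sum_add_distrib,
    Finset.sum_sub_distrib, ← Finset.mul_sum, ← Finset.mul_sum, E0, E1, E2]
  nlinarith [mul_nonneg (Nat.cast_nonneg (α := ℝ) s) (sq_nonneg mm)]

lemma entry_eq {m n p' : ℕ} {s : ℕ} (hs : 0 < s)
    (A : Matrix (Fin m) (Fin n) ℝ) (B : Matrix (Fin n) (Fin p') ℝ)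
    (p : Fin n → ℝ) (hp : ∀ i, 0 < p i) (ω : Fin s → Fin n) (a : Fin m) (b : Fin p') :
    (A * (samplingMatrix p s ω)ᵀ * samplingMatrix p s ω * B) a b
      = ∑ i : Fin s, A a (ω i) * B (ω i) b / (s * p (ω i)) := by
  have hsp : ∀ k, (0:ℝ) < (s : ℝ) * p k := fun k =>
    mul_pos (by exact_mod_cast hs) (hp k)
  simp only [Matrix.mul_apply, samplingMatrix, Matrix.transpose_apply, mul_ite, mul_zero,
    ite_mul, zero_mul, Finset.sum_ite_eq', Finset.mem_univ, if_true, Finset.sum_mul]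
  rw [Finset.sum_comm]
  simp only [mul_ite, mul_zero, ite_mul, zero_mul, Finset.sum_ite_eq, Finset.sum_ite_eq',
    Finset.mem_univ, if_true]
  refine Finset.sum_congr rfl (fun i _ => ?_)
  rw [mul_assoc (A a (ω i)), div_mul_div_comm, one_mul, Real.mul_self_sqrt (hsp (ω i)).le]
  ring

/-- expected squared Frobenius error of sampled matrix multiplication. -/
theorem stmt_5 {m n p' : ℕ} (s : ℕ) (hs : 0 < s)
    (A : Matrix (Fin m) (Fin n) ℝ) (B : Matrix (Fin n) (Fin p') ℝ)
    (p : Fin n → ℝ) (hp : ∀ i, 0 < p i) (hsum : ∑ i, p i = 1) :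
    expec p (fun (ω : Fin s → Fin n) =>
      frobNorm (A * (samplingMatrix p s ω)ᵀ * samplingMatrix p s ω * B - A * B) ^ 2)
    ≤ ∑ i, (∑ j, (A j i) ^ 2) * (∑ j, (B i j) ^ 2) / (s * p i) := by
  have hs' : (0:ℝ) < s := by exact_mod_cast hs
  set y : Fin m → Fin p' → Fin n → ℝ := fun a b k => A a k * B k b / (s * p k) with hy
  have hAB : ∀ (a : Fin m) (b : Fin p'), (A * B) a b = s * ∑ k, p k * y a b k := by
    intro a b
    rw [Matrix.mul_apply, Finset.mul_sum]
    refine Finset.sum_congr rfl (fun k _ => ?_)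
    have : p k ≠ 0 := (hp k).ne'
    simp only [hy]
    field_simp [hy]
  have hfn : ∀ ω : Fin s → Fin n,
      frobNorm (A * (samplingMatrix p s ω)ᵀ * samplingMatrix p s ω * B - A * B) ^ 2
        = ∑ a, ∑ b, ((∑ i, y a b (ω i)) - s * ∑ k, p k * y a b k) ^ 2 := by
    intro ω
    rw [frobNorm, Real.sq_sqrt (by positivity)]
    refine Finset.sum_congr rfl fun a _ => Finset.sum_congr rfl fun b _ => ?_
    rw [Matrix.sub_apply, entry_eq hs A B p hp ω a b, hAB a b]
  calc expec p (fun (ω : Fin s → Fin n) =>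
      frobNorm (A * (samplingMatrix p s ω)ᵀ * samplingMatrix p s ω * B - A * B) ^ 2)
      = ∑ a, ∑ b, ∑ ω : Fin s → Fin n,
          (∏ i, p (ω i)) * ((∑ i, y a b (ω i)) - s * ∑ k, p k * y a b k) ^ 2 := by
        rw [expec]
        have h0 : ∑ ω : Fin s → Fin n, (∏ i, p (ω i)) *
              frobNorm (A * (samplingMatrix p s ω)ᵀ * samplingMatrix p s ω * B - A * B) ^ 2
            = ∑ ω : Fin s → Fin n, ∑ a, ∑ b,
              (∏ i, p (ω i)) * ((∑ i, y a b (ω i)) - s * ∑ k, p k * y a b k) ^ 2 := by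
          refine Finset.sum_congr rfl fun ω _ => ?_
          rw [hfn ω, Finset.mul_sum]
          exact Finset.sum_congr rfl fun a _ => Finset.mul_sum _ _ _
        rw [h0, Finset.sum_comm]
        exact Finset.sum_congr rfl fun a _ => Finset.sum_comm
    _ ≤ ∑ a, ∑ b, s * ∑ k, p k * (y a b k) ^ 2 := by
        refine Finset.sum_le_sum fun a _ => Finset.sum_le_sum fun b _ => ?_
        exact var_bound s p (y a b) hsum
    _ = ∑ i, (∑ j, (A j i) ^ 2) * (∑ j, (B i j) ^ 2) / (s * p i) := by
        have step : ∀ (a : Fin m) (b : Fin p'), s * ∑ k, p k * (y a b k) ^ 2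
            = ∑ k, (A a k) ^ 2 * (B k b) ^ 2 / (s * p k) := by
          intro a b
          rw [Finset.mul_sum]
          refine Finset.sum_congr rfl fun k _ => ?_
          have h1 : p k ≠ 0 := (hp k).ne'
          have h2 : (s:ℝ) ≠ 0 := hs'.ne'
          simp only [hy]
          field_simp [hy]
        calc ∑ a, ∑ b, s * ∑ k, p k * (y a b k) ^ 2
            = ∑ a, ∑ b, ∑ k, (A a k) ^ 2 * (B k b) ^ 2 / ((s:ℝ) * p k) :=
              Finset.sum_congr rfl fun a _ => Finset.sum_congr rfl fun b _ => step a b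
          _ = ∑ a, ∑ k, ∑ b, (A a k) ^ 2 * (B k b) ^ 2 / ((s:ℝ) * p k) :=
              Finset.sum_congr rfl fun a _ => Finset.sum_comm
          _ = ∑ k, ∑ a, ∑ b, (A a k) ^ 2 * (B k b) ^ 2 / ((s:ℝ) * p k) := Finset.sum_comm
          _ = ∑ i, (∑ j, (A j i) ^ 2) * (∑ j, (B i j) ^ 2) / (s * p i) := by
              refine Finset.sum_congr rfl fun k _ => ?_
              rw [Finset.sum_mul_sum, Finset.sum_div]
              exact Finset.sum_congr rfl fun a _ => by rw [Finset.sum_div]
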